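/- arXiv:1506.05564 — 4 statements merged into one kernel-verified Lean document; each statement's English description precedes it below -/
import Mathlib

section
/- Over an algebraically closed field k of characteristic 2, the common zero set in the projective plane of the three partial derivatives of f = x_0^3 x_1 + x_1^3 x_2 + x_2^3 x_0 is exactly the set of seven points (1 : ζ^{3i} : ζ^i) for 0 ≤ i ≤ 6, where ζ is a primitive 7th root of unity in k. -/
/-- Over an algebraically closed field of characteristic 2, the common zero set in `ℙ²`
of the three partial derivatives `x₀²x₁ + x₂³`, `x₀³ + x₁²x₂`, `x₁³ + x₂²x₀` of the Klein
quartic `f = x₀³x₁ + x₁³x₂ + x₂³x₀` is exactly the seven points `(1 : ζ^{3i} : ζ^i)`,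
`0 ≤ i ≤ 6`, where `ζ` is a primitive 7th root of unity. Points of `ℙ²` are nonzero
triples up to scaling. -/
theorem klein_quartic_critical_points_char_two
    {k : Type*} [Field k] [IsAlgClosed k] [CharP k 2]
    (ζ : k) (hζ : IsPrimitiveRoot ζ 7) :
    ∀ x₀ x₁ x₂ : k, ¬(x₀ = 0 ∧ x₁ = 0 ∧ x₂ = 0) →
      ((x₀ ^ 2 * x₁ + x₂ ^ 3 = 0 ∧ x₀ ^ 3 + x₁ ^ 2 * x₂ = 0 ∧ x₁ ^ 3 + x₂ ^ 2 * x₀ = 0)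
        ↔ ∃ i ≤ 6, ∃ c : k, c ≠ 0 ∧ x₀ = c ∧ x₁ = c * ζ ^ (3 * i) ∧ x₂ = c * ζ ^ i) := by
  have h2' : (2 : k) = 0 := by exact_mod_cast CharP.cast_eq_zero k 2
  intro x₀ x₁ x₂ hne
  constructor
  · rintro ⟨h1, h2, h3⟩
    have e1 : x₂ ^ 3 = x₀ ^ 2 * x₁ := by linear_combination h1 - x₀ ^ 2 * x₁ * h2'
    have e2 : x₁ ^ 2 * x₂ = x₀ ^ 3 := by linear_combination h2 - x₀ ^ 3 * h2'
    have e3 : x₁ ^ 3 = x₂ ^ 2 * x₀ := by linear_combination h3 - x₂ ^ 2 * x₀ * h2'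
    have hx0 : x₀ ≠ 0 := by
      intro h0
      subst h0
      have hx2 : x₂ = 0 := by
        have : x₂ ^ 3 = 0 := by rw [e1]; ring
        exact pow_eq_zero_iff (by norm_num) |>.mp this
      have hx1 : x₁ = 0 := by
        have : x₁ ^ 3 = 0 := by rw [e3, hx2]; ring
        exact pow_eq_zero_iff (by norm_num) |>.mp this
      exact hne ⟨rfl, hx1, hx2⟩
    have h7 : x₂ ^ 7 = x₀ ^ 7 := by
      calc x₂ ^ 7 = (x₂ ^ 3) ^ 2 * x₂ := by ring
        _ = (x₀ ^ 2 * x₁) ^ 2 * x₂ := by rw [e1]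
        _ = x₀ ^ 4 * (x₁ ^ 2 * x₂) := by ring
        _ = x₀ ^ 4 * x₀ ^ 3 := by rw [e2]
        _ = x₀ ^ 7 := by ring
    have hb : (x₂ / x₀) ^ 7 = 1 := by
      rw [div_pow, h7, div_self (pow_ne_zero _ hx0)]
    obtain ⟨i, hi, hbi⟩ := hζ.eq_pow_of_pow_eq_one hb
    have hx2 : x₂ = x₀ * ζ ^ i := by
      field_simp at hbi
      linear_combination -hbi
    refine ⟨i, by omega, x₀, hx0, rfl, ?_, hx2⟩
    have key : x₀ ^ 2 * x₁ = x₀ ^ 2 * (x₀ * ζ ^ (3 * i)) := by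
      rw [← e1, hx2]; ring
    exact mul_left_cancel₀ (pow_ne_zero 2 hx0) key
  · rintro ⟨i, hi, c, hc, rfl, rfl, rfl⟩
    have h7i : ζ ^ (7 * i) = 1 := by rw [pow_mul, hζ.pow_eq_one, one_pow]
    refine ⟨?_, ?_, ?_⟩
    · linear_combination (x₀ ^ 3 * ζ ^ (3 * i)) * h2'
    · linear_combination x₀ ^ 3 * h7i + x₀ ^ 3 * h2'
    · linear_combination x₀ ^ 3 * ζ ^ (2 * i) * h7i + x₀ ^ 3 * ζ ^ (2 * i) * h2'
end

section
/- Over an algebraically closed field of characteristic 2, the polynomial f = x_0^3 x_1 + x_1^3 x_2 + x_2^3 x_0 does not vanish at any of its critical points: if P = (1 : ζ^{3i} : ζ^i) with ζ a primitive 7th root of unity and 0 ≤ i ≤ 6, then f(P) ≠ 0. -/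
/-- Over an algebraically closed field of characteristic 2, the Klein quartic polynomial
`f = x₀³x₁ + x₁³x₂ + x₂³x₀` does not vanish at any of its critical points
`P = (1 : ζ^{3i} : ζ^i)`, `0 ≤ i ≤ 6`, where `ζ` is a primitive 7th root of unity. -/
theorem klein_quartic_nonzero_at_critical_points
    {k : Type*} [Field k] [IsAlgClosed k] [CharP k 2]
    (ζ : k) (hζ : IsPrimitiveRoot ζ 7) :
    ∀ i : ℕ, i ≤ 6 →
      (1 : k) ^ 3 * ζ ^ (3 * i) + (ζ ^ (3 * i)) ^ 3 * ζ ^ i + (ζ ^ i) ^ 3 * 1 ≠ 0 := by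
  intro i _
  have hz : ζ ≠ 0 := hζ.ne_zero (by norm_num)
  have key : (1 : k) ^ 3 * ζ ^ (3 * i) + (ζ ^ (3 * i)) ^ 3 * ζ ^ i + (ζ ^ i) ^ 3 * 1
      = (ζ ^ i) ^ 10 := by
    have h2 : (ζ ^ (3 * i) : k) + ζ ^ (3 * i) = 0 := CharTwo.add_self_eq_zero _
    rw [one_pow, one_mul, mul_one]
    rw [show (ζ ^ (3 * i)) ^ 3 * ζ ^ i = (ζ ^ i) ^ 10 by rw [pow_mul]; ring]
    ring_nf
    rw [pow_mul] at h2 ⊢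
    linear_combination h2
  rw [key]
  exact pow_ne_zero _ (pow_ne_zero _ hz)
end

section
/- Let k be an algebraically closed field of characteristic 2, and let R = k[w_1, x_1, x_2, z]/(a_0 z + f_0), where a_0 = a(1, w_1) for a homogeneous a ∈ k[w_0, w_1] and f_0 = x_0^{-4}·f with f = x_0^3 x_1 + x_1^3 x_2 + x_2^3 x_0 dehomogenized at x_0 = 1, i.e. f_0 = x_1 + x_1^3 x_2 + x_2^3. If the affine plane curve f_0 = 0 is nonsingular, then the affine hypersurface a_0 z + f_0 = 0 in affine 4-space is nonsingular: the system z·(∂a_0/∂w_1) = ∂f_0/∂x_1 = ∂f_0/∂x_2 = a_0 = a_0 z + f_0 = 0 has no solution. -/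
/-- Over an algebraically closed field `k` of characteristic 2, let
`a₀ = a(1, w₁) ∈ k[w₁]` and `f₀ = x₁ + x₁³x₂ + x₂³` (the Klein quartic dehomogenized at
`x₀ = 1`). If the affine plane curve `f₀ = 0` is nonsingular, then the affine hypersurface
`a₀ z + f₀ = 0` in `𝔸⁴` is nonsingular: the system
`z·(∂a₀/∂w₁) = ∂f₀/∂x₁ = ∂f₀/∂x₂ = a₀ = a₀ z + f₀ = 0` has no solution. -/
theorem affine_hypersurface_nonsingular
    {k : Type*} [Field k] [IsAlgClosed k] [CharP k 2]
    (a₀ : Polynomial k)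
    (hcurve : ∀ x₁ x₂ : k,
      ¬(x₁ + x₁ ^ 3 * x₂ + x₂ ^ 3 = 0 ∧ 1 + 3 * x₁ ^ 2 * x₂ = 0 ∧ x₁ ^ 3 + 3 * x₂ ^ 2 = 0)) :
    ∀ w₁ x₁ x₂ z : k,
      ¬(z * (Polynomial.derivative a₀).eval w₁ = 0 ∧
        1 + 3 * x₁ ^ 2 * x₂ = 0 ∧
        x₁ ^ 3 + 3 * x₂ ^ 2 = 0 ∧
        a₀.eval w₁ = 0 ∧
        a₀.eval w₁ * z + (x₁ + x₁ ^ 3 * x₂ + x₂ ^ 3) = 0) := by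
  rintro w₁ x₁ x₂ z ⟨-, h1, h2, ha, hz⟩
  rw [ha, zero_mul, zero_add] at hz
  exact hcurve x₁ x₂ ⟨hz, h1, h2⟩
end

section
/- Let k be an uncountable algebraically closed field of characteristic 2 and let a ∈ k[w_0, w_1] be homogeneous of degree 2n. For a general such a (squarefree with all critical points of the dehomogenization having nonzero cube term), the section z of L^2 on Z° has only almost nondegenerate critical points, where Z is the hypersurface {z·a + f = 0} in the ℙ(1,1,1,4)-bundle Q over ℙ^1 and f = x_0^3 x_1 + x_1^3 x_2 + x_2^3 x_0. -/
open MvPolynomial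

/-- `s` has an *almost nondegenerate critical point* at `P` (Kollár, V.5.6): in suitable
local coordinates (an invertible linear change `T` of coordinates centered at `P`) it
takes the form `s(P) + α x₁² + x₂x₃ + x₁³ + h` with `h` of order `≥ 3` not involving
`x₁³`. -/
def AlmostNondegCriticalPointAt {k : Type*} [Field k]
    (s : MvPolynomial (Fin 3) k) (P : Fin 3 → k) : Prop :=
  ∃ (T : Matrix (Fin 3) (Fin 3) k) (α : k) (h : MvPolynomial (Fin 3) k),
    IsUnit T.det ∧
    aeval (fun i => C (P i) + ∑ j, C (T i j) * X j) s
      = C (eval P s) + C α * X 0 ^ 2 + X 1 * X 2 + X 0 ^ 3 + h ∧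
    (∀ d ∈ h.support, 3 ≤ d.sum fun _ e => e) ∧
    coeff (Finsupp.single 0 3) h = 0

section Aux

variable {k : Type*} [Field k]

lemma pderiv0_polyaeval (a : Polynomial k) :
    pderiv (0 : Fin 3) (Polynomial.aeval (X 0 : MvPolynomial (Fin 3) k) a)
      = Polynomial.aeval (X 0 : MvPolynomial (Fin 3) k) (Polynomial.derivative a) := by
  induction a using Polynomial.induction_on' with
  | add p q hp hq => simp [hp, hq]
  | monomial n c =>
      cases n with
      | zero => simp
      | succ m =>
        simp [Polynomial.aeval_monomial, Polynomial.derivative_monomial, pderiv_pow,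
          pderiv_X_self, map_natCast]
        ring

lemma pderivj_polyaeval (a : Polynomial k) (j : Fin 3) (hj : j ≠ 0) :
    pderiv j (Polynomial.aeval (X 0 : MvPolynomial (Fin 3) k) a) = 0 := by
  induction a using Polynomial.induction_on' with
  | add p q hp hq => simp [hp, hq]
  | monomial n c =>
      simp [Polynomial.aeval_monomial, pderiv_pow, pderiv_X_of_ne hj.symm]

lemma eval_polyaeval (a : Polynomial k) (P : Fin 3 → k) :
    eval P (Polynomial.aeval (X 0 : MvPolynomial (Fin 3) k) a) = a.eval (P 0) := by
  induction a using Polynomial.induction_on' with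
  | add p q hp hq => simp [hp, hq]
  | monomial n c => simp [Polynomial.aeval_monomial, Polynomial.eval_monomial]

lemma quartic_decomp (q : Polynomial k) :
    q = Polynomial.C (q.coeff 0) + Polynomial.C (q.coeff 1) * Polynomial.X
        + Polynomial.C (q.coeff 2) * Polynomial.X ^ 2
        + Polynomial.C (q.coeff 3) * Polynomial.X ^ 3
        + Polynomial.X ^ 4 * q.divX.divX.divX.divX := by
  have h0 := Polynomial.X_mul_divX_add q
  have h1 := Polynomial.X_mul_divX_add q.divX
  have h2 := Polynomial.X_mul_divX_add q.divX.divX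
  have h3 := Polynomial.X_mul_divX_add q.divX.divX.divX
  simp only [Polynomial.coeff_divX] at h1 h2 h3
  norm_num at h1 h2 h3
  linear_combination -h0 - Polynomial.X * h1 - Polynomial.X^2 * h2 - Polynomial.X^3 * h3

lemma support_C_subset' (c : k) : (C c : MvPolynomial (Fin 3) k).support ⊆ {0} := by
  rw [C_apply]; exact support_monomial_subset

/-- all exponent vectors in the support have 0th exponent zero and weight m in vars 1,2 -/
def Hvw (m : ℕ) (φ : MvPolynomial (Fin 3) k) : Prop :=
  ∀ d ∈ φ.support, d 0 = 0 ∧ d 1 + d 2 = m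

lemma Hvw.add {m} {φ ψ : MvPolynomial (Fin 3) k} (hφ : Hvw m φ) (hψ : Hvw m ψ) :
    Hvw m (φ + ψ) := fun d hd => by
  rcases Finset.mem_union.1 (MvPolynomial.support_add hd) with h | h
  · exact hφ d h
  · exact hψ d h

lemma Hvw.mul {m l} {φ ψ : MvPolynomial (Fin 3) k} (hφ : Hvw m φ) (hψ : Hvw l ψ) :
    Hvw (m + l) (φ * ψ) := fun d hd => by
  rcases Finset.mem_add.1 (MvPolynomial.support_mul φ ψ hd) with ⟨u, hu, v, hv, rfl⟩
  obtain ⟨h1, h2⟩ := hφ u hu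
  obtain ⟨h3, h4⟩ := hψ v hv
  simp only [Finsupp.add_apply]
  omega

lemma Hvw.cast {m m'} {φ : MvPolynomial (Fin 3) k} (hφ : Hvw m φ) (h : m = m') :
    Hvw m' φ := h ▸ hφ

lemma hvw_C (c : k) : Hvw 0 (C c : MvPolynomial (Fin 3) k) := fun d hd => by
  rw [Finset.mem_singleton.1 (support_C_subset' c hd)]
  simp

lemma hvw_three : Hvw 0 (3 : MvPolynomial (Fin 3) k) := by
  have : (3 : MvPolynomial (Fin 3) k) = C 3 := (map_ofNat C 3).symm
  rw [this]; exact hvw_C 3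

lemma hvw_X1 : Hvw 1 (X 1 : MvPolynomial (Fin 3) k) := fun d hd => by
  rw [MvPolynomial.support_X, Finset.mem_singleton] at hd
  subst hd; simp

lemma hvw_X2 : Hvw 1 (X 2 : MvPolynomial (Fin 3) k) := fun d hd => by
  rw [MvPolynomial.support_X, Finset.mem_singleton] at hd
  subst hd; simp

lemma Hvw.pow {m} {φ : MvPolynomial (Fin 3) k} (hφ : Hvw m φ) (n : ℕ) :
    Hvw (n * m) (φ ^ n) := by
  induction n with
  | zero => simpa using hvw_C (1:k)
  | succ t ih =>
      have h := ih.mul hφ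
      rw [pow_succ]
      exact h.cast (by ring)

/-- the goal predicate for `h` -/
def LowFree (h : MvPolynomial (Fin 3) k) : Prop :=
  (∀ d ∈ h.support, 3 ≤ d.sum fun _ e => e) ∧
    coeff (Finsupp.single 0 3) h = 0

lemma finsupp_sum_eq (d : Fin 3 →₀ ℕ) : (d.sum fun _ e => e) = d 0 + d 1 + d 2 := by
  rw [Finsupp.sum_fintype]
  · simp [Fin.sum_univ_three]
  · intro; rfl

lemma LowFree.add {h1 h2 : MvPolynomial (Fin 3) k} (H1 : LowFree h1) (H2 : LowFree h2) :
    LowFree (h1 + h2) := by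
  refine ⟨fun d hd => ?_, by rw [MvPolynomial.coeff_add, H1.2, H2.2, add_zero]⟩
  rcases Finset.mem_union.1 (MvPolynomial.support_add hd) with h | h
  · exact H1.1 d h
  · exact H2.1 d h

/-- main workhorse: `C c * X0^j * ψ` with `ψ` pure in vars 1,2 of weight `m`. -/
lemma lowFree_CXpow {c : k} {j m : ℕ} {ψ : MvPolynomial (Fin 3) k}
    (hψ : Hvw m ψ) (h3 : 3 ≤ j + m) (hor : 1 ≤ m ∨ 4 ≤ j) :
    LowFree (C c * X 0 ^ j * ψ) := by
  have key : ∀ d ∈ (C c * X 0 ^ j * ψ).support, d 0 = j ∧ d 1 + d 2 = m := by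
    intro d hd
    rcases Finset.mem_add.1 (MvPolynomial.support_mul _ _ hd) with ⟨u, hu, v, hv, rfl⟩
    rcases Finset.mem_add.1 (MvPolynomial.support_mul _ _ hu) with ⟨u1, hu1, u2, hu2, rfl⟩
    rw [Finset.mem_singleton.1 (support_C_subset' c hu1)]
    rw [MvPolynomial.support_X_pow, Finset.mem_singleton] at hu2
    obtain ⟨h1, h2⟩ := hψ v hv
    subst hu2
    simp [h1, h2, Finsupp.single_apply]
  constructor
  · intro d hd
    rw [finsupp_sum_eq]
    obtain ⟨h1, h2⟩ := key d hd
    omega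
  · rw [← MvPolynomial.notMem_support_iff]
    intro hd
    obtain ⟨h1, h2⟩ := key _ hd
    simp [Finsupp.single_apply] at h1 h2
    omega

/-- `X0^4` times anything is fine. -/
lemma lowFree_X0four (c : k) (ψ : MvPolynomial (Fin 3) k) :
    LowFree (C c * X 0 ^ 4 * ψ) := by
  have key : ∀ d ∈ (C c * X 0 ^ 4 * ψ).support, 4 ≤ d 0 := by
    intro d hd
    rcases Finset.mem_add.1 (MvPolynomial.support_mul _ _ hd) with ⟨u, hu, v, hv, rfl⟩
    rcases Finset.mem_add.1 (MvPolynomial.support_mul _ _ hu) with ⟨u1, hu1, u2, hu2, rfl⟩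
    rw [Finset.mem_singleton.1 (support_C_subset' c hu1)]
    rw [MvPolynomial.support_X_pow, Finset.mem_singleton] at hu2
    subst hu2
    simp [Finsupp.single_apply]
  constructor
  · intro d hd
    rw [finsupp_sum_eq]
    have := key d hd
    omega
  · rw [← MvPolynomial.notMem_support_iff]
    intro hd
    have := key _ hd
    simp [Finsupp.single_apply] at this
  -- `single 0 3` applied at `0` is `3`, so `4 ≤ 3` is false

/-- the linear forms used as new coordinates in variables 1, 2 -/
noncomputable def vpoly (c1 c2 : k) : MvPolynomial (Fin 3) k := C c1 * X 1 + C c2 * X 2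

noncomputable def Q2poly (p1 p2 c1 c2 d1 d2 : k) : MvPolynomial (Fin 3) k :=
  3 * (C (p1*p2) * (vpoly c1 c2)^2) + 3 * (C (p1^2) * (vpoly c1 c2 * vpoly d1 d2))
    + 3 * (C p2 * (vpoly d1 d2)^2)

noncomputable def G3poly (p1 p2 c1 c2 d1 d2 : k) : MvPolynomial (Fin 3) k :=
  C p2 * (vpoly c1 c2)^3 + 3 * (C p1 * ((vpoly c1 c2)^2 * vpoly d1 d2)) + (vpoly d1 d2)^3

noncomputable def G4poly (c1 c2 d1 d2 : k) : MvPolynomial (Fin 3) k :=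
  (vpoly c1 c2)^3 * vpoly d1 d2

lemma hvw_vpoly (c1 c2 : k) : Hvw 1 (vpoly c1 c2) :=
  (((hvw_C c1).mul hvw_X1).add ((hvw_C c2).mul hvw_X2)).cast rfl

lemma hvw_Q2poly (p1 p2 c1 c2 d1 d2 : k) : Hvw 2 (Q2poly p1 p2 c1 c2 d1 d2) := by
  have hv := hvw_vpoly (k := k) c1 c2
  have hw := hvw_vpoly (k := k) d1 d2
  exact (((hvw_three.mul ((hvw_C _).mul (hv.pow 2))).cast rfl).add
    ((hvw_three.mul ((hvw_C _).mul (hv.mul hw))).cast rfl)).add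
    ((hvw_three.mul ((hvw_C _).mul (hw.pow 2))).cast rfl)

lemma hvw_G3poly (p1 p2 c1 c2 d1 d2 : k) : Hvw 3 (G3poly p1 p2 c1 c2 d1 d2) := by
  have hv := hvw_vpoly (k := k) c1 c2
  have hw := hvw_vpoly (k := k) d1 d2
  exact ((((hvw_C _).mul (hv.pow 3)).cast rfl).add
    ((hvw_three.mul ((hvw_C _).mul ((hv.pow 2).mul hw))).cast rfl)).add
    ((hw.pow 3).cast rfl)

lemma hvw_G4poly (c1 c2 d1 d2 : k) : Hvw 4 (G4poly c1 c2 d1 d2) :=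
  (((hvw_vpoly c1 c2).pow 3).mul (hvw_vpoly d1 d2)).cast rfl

/-- the error term -/
noncomputable def hpoly (a₀ q2 q3 l p1 p2 c1 c2 d1 d2 : k) (R G : MvPolynomial (Fin 3) k) :
    MvPolynomial (Fin 3) k :=
  C a₀ * X 0 ^ 0 * G3poly p1 p2 c1 c2 d1 d2 + C a₀ * X 0 ^ 0 * G4poly c1 c2 d1 d2
  + C (q2*l^2) * X 0 ^ 2 * Q2poly p1 p2 c1 c2 d1 d2
  + C (q2*l^2) * X 0 ^ 2 * G3poly p1 p2 c1 c2 d1 d2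
  + C (q2*l^2) * X 0 ^ 2 * G4poly c1 c2 d1 d2
  + C (q3*l^3) * X 0 ^ 3 * Q2poly p1 p2 c1 c2 d1 d2
  + C (q3*l^3) * X 0 ^ 3 * G3poly p1 p2 c1 c2 d1 d2
  + C (q3*l^3) * X 0 ^ 3 * G4poly c1 c2 d1 d2
  + C (l^4) * X 0 ^ 4 * (R * G)

lemma lowFree_hpoly (a₀ q2 q3 l p1 p2 c1 c2 d1 d2 : k) (R G : MvPolynomial (Fin 3) k) :
    LowFree (hpoly a₀ q2 q3 l p1 p2 c1 c2 d1 d2 R G) := by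
  unfold hpoly
  exact ((((((((lowFree_CXpow (hvw_G3poly p1 p2 c1 c2 d1 d2) (by norm_num) (Or.inl (by norm_num))).add
    (lowFree_CXpow (hvw_G4poly c1 c2 d1 d2) (by norm_num) (Or.inl (by norm_num)))).add
    (lowFree_CXpow (hvw_Q2poly p1 p2 c1 c2 d1 d2) (by norm_num) (Or.inl (by norm_num)))).add
    (lowFree_CXpow (hvw_G3poly p1 p2 c1 c2 d1 d2) (by norm_num) (Or.inl (by norm_num)))).add
    (lowFree_CXpow (hvw_G4poly c1 c2 d1 d2) (by norm_num) (Or.inl (by norm_num)))).add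
    (lowFree_CXpow (hvw_Q2poly p1 p2 c1 c2 d1 d2) (by norm_num) (Or.inl (by norm_num)))).add
    (lowFree_CXpow (hvw_G3poly p1 p2 c1 c2 d1 d2) (by norm_num) (Or.inl (by norm_num)))).add
    (lowFree_CXpow (hvw_G4poly c1 c2 d1 d2) (by norm_num) (Or.inl (by norm_num)))).add
    (lowFree_X0four _ _)

/-- the Taylor expansion of the Klein-quartic factor after the coordinate change -/
lemma Gexp (P : Fin 3 → k) (l c1 c2 d1 d2 : k) :
    aeval (fun i => C (P i)
        + ∑ j, C ((Matrix.of ![![l,0,0],![0,c1,c2],![0,d1,d2]] : Matrix (Fin 3) (Fin 3) k) i j) * X j)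
      ((X 1 : MvPolynomial (Fin 3) k) + X 1 ^ 3 * X 2 + X 2 ^ 3)
    = C (P 1 + (P 1)^3 * P 2 + (P 2)^3)
      + C (1 + 3*((P 1)^2 * P 2)) * vpoly c1 c2 + C ((P 1)^3 + 3*(P 2)^2) * vpoly d1 d2
      + Q2poly (P 1) (P 2) c1 c2 d1 d2 + G3poly (P 1) (P 2) c1 c2 d1 d2
      + G4poly c1 c2 d1 d2 := by
  unfold Q2poly G3poly G4poly vpoly
  simp only [map_add, map_mul, map_pow, aeval_X, Fin.sum_univ_three,
    Matrix.of_apply, Matrix.cons_val', Matrix.cons_val_zero, Matrix.cons_val_one,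
    Matrix.head_cons, Matrix.empty_val', Matrix.cons_val_fin_one, Matrix.head_fin_const,
    Matrix.cons_val_two, Matrix.tail_cons, map_zero, zero_mul, add_zero, map_one,
    map_ofNat]
  ring

/-- the main algebraic identity -/
lemma main_identity (a₀ q2 q3 l p1 p2 c1 c2 d1 d2 : k) (R : MvPolynomial (Fin 3) k)
    (hQ : C a₀ * Q2poly p1 p2 c1 c2 d1 d2 = X 1 * X 2)
    (hl : q3 * l^3 * p1 = 1) :
    (C a₀ + C q2 * (C l * X 0)^2 + C q3 * (C l * X 0)^3 + (C l * X 0)^4 * R)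
      * (C p1 + Q2poly p1 p2 c1 c2 d1 d2 + G3poly p1 p2 c1 c2 d1 d2 + G4poly c1 c2 d1 d2)
    = C (a₀ * p1) + C (q2*l^2*p1) * X 0^2 + X 1 * X 2 + X 0^3
      + hpoly a₀ q2 q3 l p1 p2 c1 c2 d1 d2 R
          (C p1 + Q2poly p1 p2 c1 c2 d1 d2 + G3poly p1 p2 c1 c2 d1 d2
            + G4poly c1 c2 d1 d2) := by
  have hl' : (C (q3 * l^3 * p1) : MvPolynomial (Fin 3) k) = 1 := by rw [hl, map_one]
  simp only [map_mul, map_pow] at hl'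
  unfold hpoly
  simp only [map_mul, map_pow]
  linear_combination hQ + hl' * (X 0 : MvPolynomial (Fin 3) k)^3

end Aux

/-- (Lemma 3.6.) Over an uncountable algebraically closed field `k` of characteristic 2,
for a general `a` (squarefree, and at every critical point `p` of the dehomogenization
both `a(p) ≠ 0` and the cube term of the local expansion is nonzero), the section `z` of
`L²` on `Z° ⊂ Z = {z·a + f = 0}` has only almost nondegenerate critical points.  On the
chart `w₀ ≠ 0`, `x₀ ≠ 0`, `a ≠ 0` one has `z = -f/a`, and (since `a` is a unit and the
characteristic is 2) `z` has only almost nondegenerate critical points iff `a²z = a·f`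
does; so the statement reads: at every critical point `P` of `s = a(w)·g(x₁,x₂)` with
`a(P₀) ≠ 0`, where `g = x₁ + x₁³x₂ + x₂³` is the dehomogenized Klein quartic, `s` has an
almost nondegenerate critical point. -/
theorem section_z_only_almost_nondegenerate_critical_points
    {k : Type*} [Field k] [IsAlgClosed k] [CharP k 2] [Uncountable k]
    (n : ℕ) (a : Polynomial k) (hdeg : a.natDegree ≤ 2 * n)
    (hsf : Squarefree a)
    (hgen : ∀ p : k, (Polynomial.derivative a).eval p = 0 →
      a.eval p ≠ 0 ∧ (a.comp (Polynomial.X + Polynomial.C p)).coeff 3 ≠ 0) :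
    ∀ P : Fin 3 → k,
      a.eval (P 0) ≠ 0 →
      (∀ j : Fin 3, eval P (pderiv j
          ((Polynomial.aeval (X 0 : MvPolynomial (Fin 3) k) a) *
            (X 1 + X 1 ^ 3 * X 2 + X 2 ^ 3))) = 0) →
      AlmostNondegCriticalPointAt
        ((Polynomial.aeval (X 0 : MvPolynomial (Fin 3) k) a) *
          (X 1 + X 1 ^ 3 * X 2 + X 2 ^ 3)) P := by
  intro P ha₀ hcrit
  unfold AlmostNondegCriticalPointAt
  have two : (2:k) = 0 := by exact_mod_cast CharP.cast_eq_zero k 2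
  -- critical point equations
  have hc1 := hcrit 1
  have hc2 := hcrit 2
  have hc0 := hcrit 0
  rw [pderiv_mul, pderivj_polyaeval a 1 (by decide)] at hc1
  rw [pderiv_mul, pderivj_polyaeval a 2 (by decide)] at hc2
  rw [pderiv_mul, pderiv0_polyaeval] at hc0
  simp [pderiv_pow, pderiv_X_self, pderiv_X_of_ne, eval_polyaeval] at hc1 hc2 hc0
  replace hc1 := hc1.resolve_left ha₀
  replace hc2 := hc2.resolve_left ha₀
  -- structural equations at the critical point
  have E1 : (P 1)^2 * P 2 = 1 := by linear_combination -hc1 + 2*((P 1)^2 * P 2)*two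
  have E2 : (P 2)^2 = (P 1)^3 := by linear_combination -hc2 + 2*(P 2)^2*two
  have h7 : (P 1)^7 = 1 := by linear_combination ((P 1)^2 * P 2 + 1) * E1 - (P 1)^4 * E2
  have hp2 : P 2 = (P 1)^5 := by linear_combination (P 1)^5 * E1 - (P 2) * h7
  have hp1 : P 1 ≠ 0 := by
    intro h; rw [h] at h7; norm_num at h7
  have hg0 : P 1 + (P 1)^3 * P 2 + (P 2)^3 = P 1 := by
    rw [hp2]
    linear_combination (P 1)*h7 + (P 1)*((P 1)^7+1)*h7 + (P 1)*two
  have hder0 : (Polynomial.derivative a).eval (P 0) = 0 := by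
    rcases hc0 with h | h
    · exact h
    · exact absurd (hg0 ▸ h) hp1
  obtain ⟨-, hq3⟩ := hgen (P 0) hder0
  -- the shifted univariate polynomial and its low coefficients
  set q : Polynomial k := a.comp (Polynomial.X + Polynomial.C (P 0)) with hqdef
  have hq0 : q.coeff 0 = a.eval (P 0) := by
    rw [Polynomial.coeff_zero_eq_eval_zero, hqdef, Polynomial.eval_comp]
    simp
  have hq1 : q.coeff 1 = 0 := by
    have h := Polynomial.coeff_derivative q 0
    have h' : (Polynomial.derivative q).coeff 0 = 0 := by
      rw [Polynomial.coeff_zero_eq_eval_zero, hqdef, Polynomial.derivative_comp]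
      simp [Polynomial.eval_comp, hder0]
    rw [h'] at h
    simpa using h.symm
  have hq3' : q.coeff 3 ≠ 0 := hq3
  -- the cube root of unity
  obtain ⟨w0, hw0⟩ := IsAlgClosed.exists_root
    (Polynomial.X^2 + Polynomial.X + Polynomial.C 1 : Polynomial k)
    (by
      have : (Polynomial.X^2 + Polynomial.X + Polynomial.C 1 : Polynomial k).degree = 2 := by
        compute_degree!
      rw [this]; norm_num)
  have hω : w0^2 + w0 + 1 = 0 := by
    have := hw0
    simp [Polynomial.IsRoot, Polynomial.eval_add, Polynomial.eval_pow] at this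
    linear_combination this
  -- the scaling constants
  set m : k := P 1 * (a.eval (P 0))⁻¹ with hmdef
  have hm : a.eval (P 0) * m = P 1 := by
    rw [hmdef]; field_simp
  have hmne : m ≠ 0 := by
    intro h
    rw [h, mul_zero] at hm
    exact hp1 hm.symm
  obtain ⟨l, hl⟩ := IsAlgClosed.exists_pow_nat_eq ((q.coeff 3 * P 1)⁻¹) (n := 3) (by norm_num)
  have hq3p1 : q.coeff 3 * P 1 ≠ 0 := mul_ne_zero hq3' hp1
  have hl1 : q.coeff 3 * l^3 * P 1 = 1 := by
    rw [hl]; field_simp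
  have hlne : l ≠ 0 := by
    intro h
    rw [h] at hl1; simpa using hl1
  -- quadratic-form coefficient identities
  have KA : (a.eval (P 0)) * (3*(P 1 * P 2)*((1+w0)*(1+w0)) + 3*(P 1)^2*((1+w0)*((P 1)^4))
      + 3*(P 2)*((P 1)^4*(P 1)^4)) = 0 := by
    rw [hp2]
    linear_combination 3*(a.eval (P 0))*(P 1)^6*hω
      + (3*(a.eval (P 0))*(P 1)^6*w0 + 3*(a.eval (P 0))*(P 1)^6)*two
      + 3*(a.eval (P 0))*(P 1)^6*h7
  have KD : (a.eval (P 0)) * (3*(P 1 * P 2)*((w0*m)*(w0*m)) + 3*(P 1)^2*((w0*m)*(m*(P 1)^4))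
      + 3*(P 2)*((m*(P 1)^4)*(m*(P 1)^4))) = 0 := by
    rw [hp2]
    linear_combination 3*(a.eval (P 0))*m^2*(P 1)^6*hω + 3*(a.eval (P 0))*m^2*(P 1)^6*h7
  have KB : (a.eval (P 0)) * (3*(P 1 * P 2)*(2*((1+w0)*(w0*m)))
      + 3*(P 1)^2*((1+w0)*(m*(P 1)^4) + (w0*m)*((P 1)^4))
      + 3*(P 2)*(2*((P 1)^4*(m*(P 1)^4)))) = 1 := by
    rw [hp2]
    linear_combination 3*(P 1)^6*hm + 3*h7
      + (3*(a.eval (P 0))*m*(P 1)^6*w0 + 3*(a.eval (P 0))*m*(P 1)^6*w0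
        + 3*(a.eval (P 0))*m*(P 1)^6*w0^2 + 3*(a.eval (P 0))*m*(P 1)^13 + 1)*two
  -- the quadratic part becomes X1 * X2
  have hQ : C (a.eval (P 0)) * Q2poly (P 1) (P 2) (1+w0) (w0*m) ((P 1)^4) (m*(P 1)^4)
      = (X 1 : MvPolynomial (Fin 3) k) * X 2 := by
    have KA' := congrArg (C : k →+* MvPolynomial (Fin 3) k) KA
    have KB' := congrArg (C : k →+* MvPolynomial (Fin 3) k) KB
    have KD' := congrArg (C : k →+* MvPolynomial (Fin 3) k) KD
    simp only [map_mul, map_add, map_pow, map_one, map_ofNat, map_zero] at KA' KB' KD'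
    unfold Q2poly vpoly
    simp only [map_mul, map_add, map_pow, map_one, map_ofNat]
    linear_combination KA' * (X 1 : MvPolynomial (Fin 3) k)^2
      + KB' * ((X 1 : MvPolynomial (Fin 3) k) * X 2)
      + KD' * (X 2 : MvPolynomial (Fin 3) k)^2
  -- low coefficients of q
  have he1 : 1 + 3*((P 1)^2 * P 2) = (0:k) := by linear_combination hc1
  have he2 : (P 1)^3 + 3*(P 2)^2 = (0:k) := by linear_combination hc2
  -- the tail of the univariate expansion
  set Rm : MvPolynomial (Fin 3) k :=
    Polynomial.aeval (C l * X 0 : MvPolynomial (Fin 3) k) q.divX.divX.divX.divX with hRmdef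
  refine ⟨Matrix.of ![![l,0,0],![0,1+w0,w0*m],![0,(P 1)^4, m*(P 1)^4]],
    q.coeff 2 * l^2 * P 1,
    hpoly (a.eval (P 0)) (q.coeff 2) (q.coeff 3) l (P 1) (P 2) (1+w0) (w0*m) ((P 1)^4)
      (m*(P 1)^4) Rm
      (C (P 1) + Q2poly (P 1) (P 2) (1+w0) (w0*m) ((P 1)^4) (m*(P 1)^4)
        + G3poly (P 1) (P 2) (1+w0) (w0*m) ((P 1)^4) (m*(P 1)^4)
        + G4poly (1+w0) (w0*m) ((P 1)^4) (m*(P 1)^4)), ?_, ?_, ?_, ?_⟩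
  · -- determinant
    have hdet : (Matrix.of ![![l,0,0],![0,1+w0,w0*m],![0,(P 1)^4, m*(P 1)^4]]
        : Matrix (Fin 3) (Fin 3) k).det = l * (m * (P 1)^4) := by
      simp [Matrix.det_fin_three]
      ring
    rw [hdet]
    exact (isUnit_iff_ne_zero).2 (mul_ne_zero hlne (mul_ne_zero hmne (pow_ne_zero _ hp1)))
  · -- the big identity
    rw [map_mul]
    -- the univariate factor
    have h1 : aeval (fun i => C (P i)
        + ∑ j, C ((Matrix.of ![![l,0,0],![0,1+w0,w0*m],![0,(P 1)^4, m*(P 1)^4]]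
            : Matrix (Fin 3) (Fin 3) k) i j) * X j) (X 0 : MvPolynomial (Fin 3) k)
        = C l * X 0 + C (P 0) := by
      simp [Fin.sum_univ_three]
      ring
    have hA : aeval (fun i => C (P i)
        + ∑ j, C ((Matrix.of ![![l,0,0],![0,1+w0,w0*m],![0,(P 1)^4, m*(P 1)^4]]
            : Matrix (Fin 3) (Fin 3) k) i j) * X j)
          (Polynomial.aeval (X 0 : MvPolynomial (Fin 3) k) a)
        = C (a.eval (P 0)) + C (q.coeff 2) * (C l * X 0)^2 + C (q.coeff 3) * (C l * X 0)^3
          + (C l * X 0)^4 * Rm := by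
      calc aeval _ (Polynomial.aeval (X 0 : MvPolynomial (Fin 3) k) a)
          = Polynomial.aeval (C l * X 0 + C (P 0) : MvPolynomial (Fin 3) k) a := by
            rw [← Polynomial.aeval_algHom_apply, h1]
        _ = Polynomial.aeval (C l * X 0 : MvPolynomial (Fin 3) k) q := by
            rw [hqdef, Polynomial.aeval_comp]
            simp [MvPolynomial.algebraMap_eq, add_comm]
        _ = _ := by
            conv_lhs => rw [quartic_decomp q]
            simp only [map_add, map_mul, map_pow, Polynomial.aeval_X, Polynomial.aeval_C,
              MvPolynomial.algebraMap_eq, hq1, map_zero, zero_mul, add_zero]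
            rw [hq0, ← hRmdef]
    -- the Klein-quartic factor
    have hG := Gexp P l (1+w0) (w0*m) ((P 1)^4) (m*(P 1)^4)
    rw [hg0, he1, he2] at hG
    simp only [map_zero, zero_mul, add_zero, zero_add] at hG
    rw [hA, hG]
    -- evaluation of s at P
    have heval : eval P (Polynomial.aeval (X 0 : MvPolynomial (Fin 3) k) a
        * ((X 1 : MvPolynomial (Fin 3) k) + X 1^3*X 2 + X 2^3)) = a.eval (P 0) * P 1 := by
      rw [map_mul, eval_polyaeval]
      congr 1
      simp only [map_add, map_mul, map_pow, eval_X]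
      linear_combination hg0
    rw [heval]
    exact main_identity (a.eval (P 0)) (q.coeff 2) (q.coeff 3) l (P 1) (P 2) (1+w0) (w0*m)
      ((P 1)^4) (m*(P 1)^4) Rm hQ hl1
  · exact (lowFree_hpoly _ _ _ _ _ _ _ _ _ _ _ _).1
  · exact (lowFree_hpoly _ _ _ _ _ _ _ _ _ _ _ _).2
end
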